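/- Let Q be the mod-2 intersection matrix of a weighted tree Γ and let v be a leaf of Γ with even weight, attached to the vertex w. Let Γ' be the tree obtained by deleting v and w. Then the corank over ℤ/2 of the intersection matrix of Γ' equals the corank over ℤ/2 of Q. -/

import Mathlib

/-- Neumann's Move 1 (deleting an even-weight leaf `v` together with its
neighbor `w`) preserves the corank over ℤ/2 of the mod-2 intersection matrix of a
weighted tree. -/
theorem stmt1 (n : ℕ) (G : SimpleGraph (Fin n)) [DecidableRel G.Adj] (hG : G.IsTree)
    (wt : Fin n → ℤ) (v w : Fin n)
    (hleaf : G.degree v = 1) (hadj : G.Adj v w) (heven : Even (wt v)) :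
    Module.finrank (ZMod 2) (LinearMap.ker (Matrix.toLin'
      (fun i j : {i : Fin n // i ≠ v ∧ i ≠ w} =>
        if (i : Fin n) = (j : Fin n) then ((wt i : ZMod 2))
        else if G.Adj (i : Fin n) (j : Fin n) then 1 else 0))) =
    Module.finrank (ZMod 2) (LinearMap.ker (Matrix.toLin'
      (fun i j : Fin n =>
        if i = j then ((wt i : ZMod 2)) else if G.Adj i j then 1 else 0))) := by
  classical
  have hvw : v ≠ w := hadj.ne
  set Q : Matrix (Fin n) (Fin n) (ZMod 2) :=
    (fun i j : Fin n =>
        if i = j then ((wt i : ZMod 2)) else if G.Adj i j then 1 else 0) with hQdef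
  set S : Matrix {i : Fin n // i ≠ v ∧ i ≠ w} {i : Fin n // i ≠ v ∧ i ≠ w} (ZMod 2) :=
    (fun i j : {i : Fin n // i ≠ v ∧ i ≠ w} =>
        if (i : Fin n) = (j : Fin n) then ((wt i : ZMod 2))
        else if G.Adj (i : Fin n) (j : Fin n) then 1 else 0) with hSdef
  have char2 : ∀ a : ZMod 2, a + a = 0 := by decide
  -- the only neighbor of v is w
  have hnbr : ∀ j, G.Adj v j → j = w := by
    intro j hj
    obtain ⟨a, ha⟩ := Finset.card_eq_one.mp hleaf
    have hw : w ∈ G.neighborFinset v := (SimpleGraph.mem_neighborFinset G v w).mpr hadj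
    have hj' : j ∈ G.neighborFinset v := (SimpleGraph.mem_neighborFinset G v j).mpr hj
    rw [ha, Finset.mem_singleton] at hw hj'
    rw [hj', hw]
  have hQvv : Q v v = 0 := by
    have h2 : (2 : ℤ) ∣ wt v := heven.two_dvd
    have : ((wt v : ZMod 2)) = 0 := (ZMod.intCast_zmod_eq_zero_iff_dvd (wt v) 2).mpr h2
    simp [hQdef, this]
  have hQv : ∀ j, j ≠ w → Q v j = 0 := by
    intro j hjw
    by_cases hjv : j = v
    · subst hjv; exact hQvv
    · have hna : ¬ G.Adj v j := fun h => hjw (hnbr j h)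
      simp [hQdef, Ne.symm hjv, hna]
  have hQ_v : ∀ i, i ≠ w → Q i v = 0 := by
    intro i hiw
    by_cases hiv : i = v
    · subst hiv; exact hQvv
    · have hna : ¬ G.Adj i v := fun h => hiw (hnbr i (G.adj_symm h))
      simp [hQdef, hiv, hna]
  have hQvw : Q v w = 1 := by simp [hQdef, hvw, hadj]
  have hQwv : Q w v = 1 := by simp [hQdef, Ne.symm hvw, G.adj_symm hadj]
  -- sum decomposition over Fin n
  have hsum : ∀ F : Fin n → ZMod 2,
      ∑ j, F j = F v + F w + ∑ j : {j : Fin n // j ≠ v ∧ j ≠ w}, F j := by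
    intro F
    have hmem : ∀ x : Fin n, x ∈ (({v, w} : Finset (Fin n))ᶜ) ↔ (x ≠ v ∧ x ≠ w) := by
      intro x
      simp [Finset.mem_compl, not_or]
    have h1 : ∑ j ∈ (({v, w} : Finset (Fin n))ᶜ), F j
        = ∑ j : {j : Fin n // j ≠ v ∧ j ≠ w}, F j :=
      Finset.sum_subtype _ hmem F
    have h2 : ∑ j ∈ ({v, w} : Finset (Fin n)), F j
        + ∑ j ∈ (({v, w} : Finset (Fin n))ᶜ), F j = ∑ j, F j :=
      Finset.sum_add_sum_compl _ _
    rw [← h2, h1, Finset.sum_pair hvw]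
  -- row formula for mulVec
  have hrow : ∀ (y : Fin n → ZMod 2) (i : Fin n),
      Q.mulVec y i = Q i v * y v + Q i w * y w
        + ∑ j : {j : Fin n // j ≠ v ∧ j ≠ w}, Q i (j : Fin n) * y (j : Fin n) := by
    intro y i
    rw [Matrix.mulVec, dotProduct]
    exact hsum (fun j => Q i j * y j)
  -- S entries agree with Q entries
  have hSQ : ∀ i j : {i : Fin n // i ≠ v ∧ i ≠ w}, S i j = Q (i : Fin n) (j : Fin n) := by
    intro i j
    rfl
  -- restriction linear map
  set r : (Fin n → ZMod 2) →ₗ[ZMod 2] ({i : Fin n // i ≠ v ∧ i ≠ w} → ZMod 2) :=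
    LinearMap.funLeft (ZMod 2) (ZMod 2) Subtype.val with hrdef
  -- key: row v of Q.mulVec y equals y w
  have hrowv : ∀ y : Fin n → ZMod 2, Q.mulVec y v = y w := by
    intro y
    rw [hrow]
    have h0 : ∀ j : {j : Fin n // j ≠ v ∧ j ≠ w}, Q v (j : Fin n) * y (j : Fin n) = 0 := by
      intro j; rw [hQv _ j.2.2]; ring
    rw [Finset.sum_congr rfl (fun j _ => h0 j), hQvv, hQvw]
    simp
  -- row i (i off v,w) of Q.mulVec y
  have hrowi : ∀ (y : Fin n → ZMod 2) (i : {i : Fin n // i ≠ v ∧ i ≠ w}),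
      Q.mulVec y (i : Fin n) = Q (i : Fin n) w * y w + S.mulVec (r y) i := by
    intro y i
    rw [hrow]
    rw [hQ_v _ i.2.2]
    have : S.mulVec (r y) i
        = ∑ j : {j : Fin n // j ≠ v ∧ j ≠ w}, Q (i : Fin n) (j : Fin n) * y (j : Fin n) := by
      rw [Matrix.mulVec, dotProduct]
      exact Finset.sum_congr rfl (fun j _ => by rw [hSQ]; rfl)
    rw [this]; ring
  -- row w of Q.mulVec y
  have hroww : ∀ y : Fin n → ZMod 2,
      Q.mulVec y w = y v + Q w w * y w
        + ∑ j : {j : Fin n // j ≠ v ∧ j ≠ w}, Q w (j : Fin n) * y (j : Fin n) := by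
    intro y
    rw [hrow, hQwv]; ring_nf
  -- the restriction maps ker(Q) to ker(S)
  have hmaps : ∀ y ∈ LinearMap.ker (Matrix.toLin' Q),
      r y ∈ LinearMap.ker (Matrix.toLin' S) := by
    intro y hy
    rw [LinearMap.mem_ker, Matrix.toLin'_apply] at hy ⊢
    have hyw : y w = 0 := by rw [← hrowv y, hy]; rfl
    funext i
    have := hrowi y i
    rw [hy] at this
    simp only [Pi.zero_apply] at this ⊢
    rw [hyw, mul_zero, zero_add] at this
    exact this.symm
  set down : (LinearMap.ker (Matrix.toLin' Q)) →ₗ[ZMod 2] (LinearMap.ker (Matrix.toLin' S)) :=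
    LinearMap.codRestrict _ (r.comp (LinearMap.ker (Matrix.toLin' Q)).subtype)
      (fun y => hmaps y.1 y.2) with hdowndef
  have hinj : Function.Injective down := by
    intro y z hyz
    have h : r y.1 = r z.1 := congrArg Subtype.val hyz
    have hy := y.2; have hz := z.2
    rw [LinearMap.mem_ker, Matrix.toLin'_apply] at hy hz
    have hyw : y.1 w = 0 := by rw [← hrowv y.1, hy]; rfl
    have hzw : z.1 w = 0 := by rw [← hrowv z.1, hz]; rfl
    have hvv : y.1 v = z.1 v := by
      have h1 := hroww y.1
      have h2 := hroww z.1
      rw [hy] at h1; rw [hz] at h2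
      have hsub : ∀ j : {j : Fin n // j ≠ v ∧ j ≠ w}, y.1 (j : Fin n) = z.1 (j : Fin n) := by
        intro j; exact congrFun h j
      simp only [Pi.zero_apply] at h1 h2
      rw [hyw] at h1; rw [hzw] at h2
      rw [Finset.sum_congr rfl (fun j _ => by rw [hsub j])] at h1
      have := h1.symm.trans h2
      simpa using this
    apply Subtype.ext
    funext i
    by_cases hiv : i = v
    · subst hiv; exact hvv
    · by_cases hiw : i = w
      · subst hiw; rw [hyw, hzw]
      · exact congrFun h ⟨i, hiv, hiw⟩
  have hsurj : Function.Surjective down := by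
    intro x
    have hx := x.2
    rw [LinearMap.mem_ker, Matrix.toLin'_apply] at hx
    set c : ZMod 2 := ∑ j : {j : Fin n // j ≠ v ∧ j ≠ w}, Q w (j : Fin n) * x.1 j with hcdef
    set y : Fin n → ZMod 2 := fun j =>
      if hv : j = v then c else if hw : j = w then 0 else x.1 ⟨j, hv, hw⟩ with hydef
    have hyv : y v = c := by simp [hydef]
    have hyw : y w = 0 := by simp [hydef, Ne.symm hvw]
    have hry : r y = x.1 := by
      funext j
      have h1 : r y j = y (j : Fin n) := rfl
      rw [h1, hydef]
      simp only [j.2.1, j.2.2, dif_neg, not_false_iff]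
    have hker : y ∈ LinearMap.ker (Matrix.toLin' Q) := by
      rw [LinearMap.mem_ker, Matrix.toLin'_apply]
      funext i
      simp only [Pi.zero_apply]
      by_cases hiv : i = v
      · rw [hiv, hrowv y, hyw]
      · by_cases hiw : i = w
        · rw [hiw]
          rw [hroww y, hyw, hyv, mul_zero, add_zero]
          have : ∑ j : {j : Fin n // j ≠ v ∧ j ≠ w}, Q w (j : Fin n) * y (j : Fin n) = c := by
            rw [hcdef]
            refine Finset.sum_congr rfl (fun j _ => ?_)
            have : y (j : Fin n) = x.1 j := by
              have := congrFun hry j; rwa [show r y j = y (j : Fin n) from rfl] at this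
            rw [this]
          rw [this]
          exact char2 c
        · have := hrowi y ⟨i, hiv, hiw⟩
          rw [hry, hx] at this
          simp only [Pi.zero_apply] at this
          rw [this, hyw]; ring
    exact ⟨⟨y, hker⟩, Subtype.ext hry⟩
  have e : (LinearMap.ker (Matrix.toLin' Q)) ≃ₗ[ZMod 2] (LinearMap.ker (Matrix.toLin' S)) :=
    LinearEquiv.ofBijective down ⟨hinj, hsurj⟩
  exact e.symm.finrank_eq
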